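/- Let G be a finite simple graph with vertex clique-partition π = {W_1,…,W_d}, let G^π be the clique-whiskered graph with added vertex set W, and order the maximal independent vertex sets of G^π by F_1 ≤ F_2 ⇔ F_1 \ W ⊆ F_2 \ W. Let F be a maximal element of this poset and set r = |F \ W|. Then the interval [W, F] = {maximal independent sets H of G^π with H \ W ⊆ F \ W} has exactly 2^r elements; indeed the map H ↦ H \ W is a bijection from [W, F] onto the power set of F \ W. -/
import Mathlib


namespace Paper

variable {V : Type*}

/-- `S` is an independent vertex set of the graph `H` (equivalently, of any induced
subgraph of `H` containing `S`): its vertices are pairwise non-adjacent. -/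
def IndepOn (H : SimpleGraph V) (S : Set V) : Prop :=
  ∀ x ∈ S, ∀ y ∈ S, ¬ H.Adj x y

/-- `S` is a maximal independent vertex set of the graph `H`. -/
def MaxIndep (H : SimpleGraph V) (S : Set V) : Prop :=
  IndepOn H S ∧ ∀ T : Set V, IndepOn H T → S ⊆ T → T = S

/-- The data exhibiting the graph `H` (on its full vertex type) as the
clique-whiskered graph `G^π` over the base graph `G` (the induced subgraph of `H` on
`Vg`), built from a vertex clique-partition `π = {W_1, …, W_d}` of `G` by adding `d`
new vertices `s_1', …, s_d'`, where `s_i'` is adjacent exactly to the vertices of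
`W i`.  The set of added vertices is `W = Set.range sV`. -/
structure CliqueWhiskered (H : SimpleGraph V) (d : ℕ) where
  /-- the vertex set of the base graph `G`; the edges of `G` are the edges of `H`
  between vertices of `Vg`, i.e. `G` is the induced subgraph of `H` on `Vg`. -/
  Vg : Set V
  /-- the vertex clique-partition `π = {W_1, …, W_d}` of `G` -/
  W : Fin d → Set V
  /-- the added whisker vertices `s_1', …, s_d'` -/
  sV : Fin d → V
  W_ne : ∀ i, (W i).Nonempty
  W_sub : ∀ i, W i ⊆ Vg
  W_disj : ∀ i j, i ≠ j → Disjoint (W i) (W j)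
  W_cover : Vg ⊆ ⋃ i, W i
  W_clique : ∀ i, ∀ x ∈ W i, ∀ y ∈ W i, x ≠ y → H.Adj x y
  s_notin : ∀ i, sV i ∉ Vg
  s_inj : Function.Injective sV
  /-- the vertex set of `G^π` is `V(G)` together with the new vertices -/
  total : Set.univ = Vg ∪ Set.range sV
  /-- `s_i'` is adjacent exactly to the vertices of `W i` -/
  s_adj : ∀ i, ∀ w : V, H.Adj (sV i) w ↔ w ∈ W i

/-- The number of subsets of a set in a fintype is `2 ^` its cardinality. -/
lemma ncard_powerset [Fintype V] (A : Set V) :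
    {T : Set V | T ⊆ A}.ncard = 2 ^ A.ncard := by
  classical
  have himg : {T : Set V | T ⊆ A} =
      (fun s : Finset V => (s : Set V)) '' ↑A.toFinset.powerset := by
    ext T
    simp only [Set.mem_setOf_eq, Set.mem_image, Finset.mem_coe,
      Finset.mem_powerset]
    constructor
    · intro hT
      refine ⟨T.toFinset, ?_, by simp⟩
      intro x hx
      simp only [Set.mem_toFinset] at hx ⊢
      exact hT hx
    · rintro ⟨s, hs, rfl⟩
      intro x hx
      have := hs hx
      simpa using this
  rw [himg, Set.ncard_image_of_injOn]
  · rw [Set.ncard_coe_finset, Finset.card_powerset, Set.ncard_eq_toFinset_card']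
  · intro s _ t _ h
    exact_mod_cast Finset.coe_injective h

/-- The unique maximal independent set of `G^π` whose trace on `V(G)` is `T`. -/
def Phi {H : SimpleGraph V} {d : ℕ} (M : CliqueWhiskered H d) (T : Set V) : Set V :=
  T ∪ M.sV '' {i | T ∩ M.W i = ∅}

/-- **Theorem.** Let `F` be a maximal element of the poset of maximal independent
vertex sets of `G^π` (ordered by `F₁ ≤ F₂ ⇔ F₁ \ W ⊆ F₂ \ W`) and let
`r = |F \ W|`.  Then `H ↦ H \ W` is a bijection from the interval
`[W, F] = {maximal independent sets H with H \ W ⊆ F \ W}` onto the power set of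
`F \ W`; in particular the interval `[W, F]` has exactly `2 ^ r` elements. -/
theorem cliqueWhiskered_interval_card [Fintype V]
    (H : SimpleGraph V) (d : ℕ) (M : CliqueWhiskered H d)
    (F : Set V) (hF : MaxIndep H F)
    (hFmax : ∀ F' : Set V, MaxIndep H F' →
      F \ Set.range M.sV ⊆ F' \ Set.range M.sV →
      F' \ Set.range M.sV = F \ Set.range M.sV)
    (r : ℕ) (hr : (F \ Set.range M.sV).ncard = r) :
    (∀ T ⊆ F \ Set.range M.sV,
      ∃! Fs : Set V, MaxIndep H Fs ∧ Fs \ Set.range M.sV = T) ∧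
    {Fs : Set V | MaxIndep H Fs ∧
      Fs \ Set.range M.sV ⊆ F \ Set.range M.sV}.ncard = 2 ^ r := by
  classical
  set rng := Set.range M.sV with hrng
  -- basic facts
  have hWrng : ∀ i, ∀ x ∈ M.W i, x ∉ rng := by
    rintro i x hx ⟨j, rfl⟩
    exact M.s_notin j (M.W_sub i hx)
  have hss : ∀ i j, ¬ H.Adj (M.sV i) (M.sV j) := by
    intro i j h
    rw [M.s_adj] at h
    exact M.s_notin j (M.W_sub i h)
  -- whisker vertex membership in a maximal independent set
  have hmem : ∀ Fs : Set V, MaxIndep H Fs → ∀ i, (M.sV i ∈ Fs ↔ Fs ∩ M.W i = ∅) := by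
    intro Fs hFs i
    constructor
    · intro hi
      ext x
      simp only [Set.mem_inter_iff, Set.mem_empty_iff_false, iff_false, not_and]
      intro hxF hxW
      exact hFs.1 (M.sV i) hi x hxF ((M.s_adj i x).2 hxW)
    · intro hdisj
      by_contra hi
      have hind : IndepOn H (Fs ∪ {M.sV i}) := by
        rintro x (hx | hx) y (hy | hy)
        · exact hFs.1 x hx y hy
        · rcases hy with rfl
          intro h
          have : x ∈ M.W i := (M.s_adj i x).1 h.symm
          exact absurd (Set.mem_inter hx this) (by rw [hdisj]; simp)
        · rcases hx with rfl
          intro h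
          have : y ∈ M.W i := (M.s_adj i y).1 h
          exact absurd (Set.mem_inter hy this) (by rw [hdisj]; simp)
        · rcases hx with rfl; rcases hy with rfl
          exact H.irrefl
      have := hFs.2 _ hind Set.subset_union_left
      exact hi (this ▸ Set.mem_union_right Fs rfl)
  -- maximal independent sets are determined by their trace on Vg
  have huniq : ∀ Fs : Set V, MaxIndep H Fs → Fs = Phi M (Fs \ rng) := by
    intro Fs hFs
    have hkey : ∀ i, (Fs \ rng) ∩ M.W i = Fs ∩ M.W i := by
      intro i
      ext x
      simp only [Set.mem_inter_iff, Set.mem_diff]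
      exact ⟨fun h => ⟨h.1.1, h.2⟩, fun h => ⟨⟨h.1, hWrng i x h.2⟩, h.2⟩⟩
    ext v
    constructor
    · intro hv
      by_cases hvr : v ∈ rng
      · rcases hvr with ⟨i, rfl⟩
        refine Set.mem_union_right _ ⟨i, ?_, rfl⟩
        simp only [Set.mem_setOf_eq, hkey]
        exact (hmem Fs hFs i).1 hv
      · exact Set.mem_union_left _ ⟨hv, hvr⟩
    · rintro (hv | ⟨i, hi, rfl⟩)
      · exact hv.1
      · simp only [Set.mem_setOf_eq, hkey] at hi
        exact (hmem Fs hFs i).2 hi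
  -- construction: Phi T is maximal independent with trace T
  have hconstr : ∀ T : Set V, T ⊆ M.Vg → IndepOn H T →
      MaxIndep H (Phi M T) ∧ Phi M T \ rng = T := by
    intro T hTVg hTind
    have hTrng : ∀ x ∈ T, x ∉ rng := by
      rintro x hx ⟨j, rfl⟩
      exact M.s_notin j (hTVg hx)
    have hadjTs : ∀ i, T ∩ M.W i = ∅ → ∀ x ∈ T, ¬ H.Adj (M.sV i) x := by
      intro i hi x hx h
      have : x ∈ M.W i := (M.s_adj i x).1 h
      exact absurd (Set.mem_inter hx this) (by rw [hi]; simp)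
    have hind : IndepOn H (Phi M T) := by
      rintro x (hx | ⟨i, hi, rfl⟩) y (hy | ⟨j, hj, rfl⟩)
      · exact hTind x hx y hy
      · intro h; exact hadjTs j hj x hx (h.symm)
      · exact hadjTs i hi y hy
      · exact hss i j
    refine ⟨⟨hind, ?_⟩, ?_⟩
    · intro S hSind hsub
      by_contra hne
      rcases Set.exists_of_ssubset ⟨hsub, fun h => hne (le_antisymm h hsub)⟩
        with ⟨v, hvS, hvP⟩
      have hv : v ∈ M.Vg ∪ rng := M.total ▸ Set.mem_univ v
      rcases hv with hv | ⟨i, rfl⟩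
      · rcases Set.mem_iUnion.1 (M.W_cover hv) with ⟨i, hvi⟩
        by_cases hTi : T ∩ M.W i = ∅
        · have hsi : M.sV i ∈ S := hsub (Set.mem_union_right _ ⟨i, hTi, rfl⟩)
          exact hSind (M.sV i) hsi v hvS ((M.s_adj i v).2 hvi)
        · rcases Set.nonempty_iff_ne_empty.2 hTi with ⟨t, htT, htW⟩
          have htv : t ≠ v := fun h => hvP (Set.mem_union_left _ (h ▸ htT))
          exact hSind t (hsub (Set.mem_union_left _ htT)) v hvS
            (M.W_clique i t htW v hvi htv)
      · have hTi : T ∩ M.W i ≠ ∅ := fun h =>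
          hvP (Set.mem_union_right _ ⟨i, h, rfl⟩)
        rcases Set.nonempty_iff_ne_empty.2 hTi with ⟨t, htT, htW⟩
        exact hSind (M.sV i) hvS t (hsub (Set.mem_union_left _ htT))
          ((M.s_adj i t).2 htW)
    · ext x
      simp only [Phi, Set.mem_diff, Set.mem_union, Set.mem_image]
      constructor
      · rintro ⟨hx | ⟨i, _, rfl⟩, hxr⟩
        · exact hx
        · exact absurd ⟨i, rfl⟩ hxr
      · intro hx
        exact ⟨Or.inl hx, hTrng x hx⟩
  have hFVg : F \ rng ⊆ M.Vg := by
    intro x hx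
    rcases (M.total ▸ Set.mem_univ x : x ∈ M.Vg ∪ rng) with h | h
    · exact h
    · exact absurd h hx.2
  -- first part
  have part1 : ∀ T ⊆ F \ rng, ∃! Fs : Set V, MaxIndep H Fs ∧ Fs \ rng = T := by
    intro T hT
    have hTVg : T ⊆ M.Vg := hT.trans hFVg
    have hTind : IndepOn H T := fun x hx y hy =>
      hF.1 x (hT hx).1 y (hT hy).1
    obtain ⟨hmax, htr⟩ := hconstr T hTVg hTind
    refine ⟨Phi M T, ⟨hmax, htr⟩, ?_⟩
    rintro Fs ⟨hFs, rfl⟩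
    exact huniq Fs hFs
  refine ⟨part1, ?_⟩
  -- second part
  have himg : (fun Fs : Set V => Fs \ rng) ''
      {Fs : Set V | MaxIndep H Fs ∧ Fs \ rng ⊆ F \ rng} = {T : Set V | T ⊆ F \ rng} := by
    ext T
    simp only [Set.mem_image, Set.mem_setOf_eq]
    constructor
    · rintro ⟨Fs, ⟨_, hsub⟩, rfl⟩
      exact hsub
    · intro hT
      obtain ⟨Fs, ⟨hFs, htr⟩, _⟩ := part1 T hT
      exact ⟨Fs, ⟨hFs, htr ▸ hT⟩, htr⟩
  have hinj : Set.InjOn (fun Fs : Set V => Fs \ rng)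
      {Fs : Set V | MaxIndep H Fs ∧ Fs \ rng ⊆ F \ rng} := by
    intro Fs1 h1 Fs2 h2 h
    rw [huniq Fs1 h1.1, huniq Fs2 h2.1]
    simp only at h
    rw [h]
  calc {Fs : Set V | MaxIndep H Fs ∧ Fs \ rng ⊆ F \ rng}.ncard
      = ((fun Fs : Set V => Fs \ rng) ''
        {Fs : Set V | MaxIndep H Fs ∧ Fs \ rng ⊆ F \ rng}).ncard :=
        (Set.ncard_image_of_injOn hinj).symm
    _ = {T : Set V | T ⊆ F \ rng}.ncard := by rw [himg]
    _ = 2 ^ (F \ rng).ncard := ncard_powerset _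
    _ = 2 ^ r := by rw [hr]

end Paper
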